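/- Let B : ℝ⁷ → ℝ⁷ be a skew-symmetric endomorphism whose associated 2-form w(Y,Z) = ⟨B Y, Z⟩ lies in the 14-dimensional component Λ²₁₄, i.e. Σ_{1≤i<j≤7} w(eᵢ,eⱼ)·φ₀(X,eᵢ,eⱼ) = 0 for every X ∈ ℝ⁷. Then B annihilates φ₀: for all Y, Z, W ∈ ℝ⁷, φ₀(B Y, Z, W) + φ₀(Y, B Z, W) + φ₀(Y, Z, B W) = 0. (Equivalently, w⋆φ₀ = 0 for w ∈ Λ²₁₄; this expresses Λ²₁₄ ≅ 𝔤₂ as the infinitesimal stabilizer of φ₀.) -/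
import Mathlib


open scoped RealInnerProductSpace

noncomputable section

/-- `ℝ⁷` with its standard inner product. -/
abbrev V7 := EuclideanSpace ℝ (Fin 7)

/-- The standard orthonormal basis vectors of `ℝ⁷`. -/
def E (i : Fin 7) : V7 := EuclideanSpace.single i 1

/-- `(eⁱ ∧ eʲ ∧ eᵏ)(X,Y,Z)` : the 3×3 determinant of coordinates `i,j,k` of `X,Y,Z`. -/
def triple (i j k : Fin 7) (X Y Z : V7) : ℝ :=
  X i * (Y j * Z k - Y k * Z j) - X j * (Y i * Z k - Y k * Z i) + X k * (Y i * Z j - Y j * Z i)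

/-- `(eⁱ ∧ eʲ ∧ eᵏ ∧ eˡ)(X,Y,Z,W)` : the 4×4 determinant of coordinates `i,j,k,l`. -/
def quadruple (i j k l : Fin 7) (X Y Z W : V7) : ℝ :=
  X i * triple j k l Y Z W - X j * triple i k l Y Z W
    + X k * triple i j l Y Z W - X l * triple i j k Y Z W

/-- The associative 3-form
`φ₀ = e¹²³ + e¹⁷⁶ + e²⁵⁷ + e⁶⁵³ + e¹⁴⁵ + e²⁴⁶ + e³⁴⁷` (indices shifted to `0,…,6`). -/
def phi (X Y Z : V7) : ℝ :=
  triple 0 1 2 X Y Z + triple 0 6 5 X Y Z + triple 1 4 6 X Y Z + triple 5 4 2 X Y Z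
    + triple 0 3 4 X Y Z + triple 1 3 5 X Y Z + triple 2 3 6 X Y Z

/-- The coassociative 4-form
`ψ₀ = e⁴⁵⁶⁷ − e²³⁴⁵ + e¹³⁴⁶ − e¹²⁴⁷ + e²³⁶⁷ + e¹³⁵⁷ + e¹²⁵⁶` (indices shifted to `0,…,6`). -/
def psi (X Y Z W : V7) : ℝ :=
  quadruple 3 4 5 6 X Y Z W - quadruple 1 2 3 4 X Y Z W + quadruple 0 2 3 5 X Y Z W
    - quadruple 0 1 3 6 X Y Z W + quadruple 1 2 5 6 X Y Z W + quadruple 0 2 4 6 X Y Z W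
    + quadruple 0 1 4 5 X Y Z W

/-- The cross product `A(Y,Z)`, characterized by `⟨X, A(Y,Z)⟩ = φ₀(X,Y,Z)`. -/
def cross (Y Z : V7) : V7 := ∑ i, phi (E i) Y Z • E i

/-- The tangent-valued 3-form `χ`, characterized by `(1/2)⟨X, χ(Y,Z,W)⟩ = ψ₀(X,Y,Z,W)`. -/
def chi (Y Z W : V7) : V7 := ∑ i, (2 * psi (E i) Y Z W) • E i

set_option maxHeartbeats 4000000 in
/-- A skew endomorphism whose 2-form lies in `Λ²₁₄` annihilates `φ₀`. -/
theorem stmt7 (B : V7 →ₗ[ℝ] V7)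
    (hskew : ∀ X Y : V7, ⟪B X, Y⟫ = -⟪X, B Y⟫)
    (h14 : ∀ X : V7, ∑ i : Fin 7, ∑ j : Fin 7,
      (if i < j then ⟪B (E i), E j⟫ * phi X (E i) (E j) else 0) = 0) :
    ∀ Y Z W : V7, phi (B Y) Z W + phi Y (B Z) W + phi Y Z (B W) = 0 := by
  have hin : ∀ (x : V7) (m : Fin 7), ⟪x, E m⟫ = x m := by
    intro x m; simp [E, EuclideanSpace.inner_single_right]
  have hE : ∀ i : Fin 7, EuclideanSpace.single i (1:ℝ) = E i := fun _ => rfl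
  have hb : ∀ i j : Fin 7, B (E i) j = -(B (E j) i) := by
    intro i j
    have h := hskew (E i) (E j)
    rw [hin] at h
    rw [h, real_inner_comm, hin]
  have hY : ∀ (Y : V7) (m : Fin 7), B Y m =
      Y 0 * B (E 0) m + Y 1 * B (E 1) m + Y 2 * B (E 2) m + Y 3 * B (E 3) m
      + Y 4 * B (E 4) m + Y 5 * B (E 5) m + Y 6 * B (E 6) m := by
    intro Y m
    have h1 : B Y m = ⟪B Y, E m⟫ := (hin _ _).symm
    rw [h1, hskew, PiLp.inner_apply]
    simp only [RCLike.inner_apply, conj_trivial, Fin.sum_univ_seven]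
    rw [hb m 0, hb m 1, hb m 2, hb m 3, hb m 4, hb m 5, hb m 6]
    ring
  have H0 := h14 (E 0)
  simp only [hin] at H0
  simp (config := { decide := true }) only [Fin.sum_univ_seven, phi, triple, E,
    EuclideanSpace.single_apply] at H0
  norm_num [hE] at H0
  have H1 := h14 (E 1)
  simp only [hin] at H1
  simp (config := { decide := true }) only [Fin.sum_univ_seven, phi, triple, E,
    EuclideanSpace.single_apply] at H1
  norm_num [hE] at H1
  have H2 := h14 (E 2)
  simp only [hin] at H2
  simp (config := { decide := true }) only [Fin.sum_univ_seven, phi, triple, E,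
    EuclideanSpace.single_apply] at H2
  norm_num [hE] at H2
  have H3 := h14 (E 3)
  simp only [hin] at H3
  simp (config := { decide := true }) only [Fin.sum_univ_seven, phi, triple, E,
    EuclideanSpace.single_apply] at H3
  norm_num [hE] at H3
  have H4 := h14 (E 4)
  simp only [hin] at H4
  simp (config := { decide := true }) only [Fin.sum_univ_seven, phi, triple, E,
    EuclideanSpace.single_apply] at H4
  norm_num [hE] at H4
  have H5 := h14 (E 5)
  simp only [hin] at H5
  simp (config := { decide := true }) only [Fin.sum_univ_seven, phi, triple, E,
    EuclideanSpace.single_apply] at H5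
  norm_num [hE] at H5
  have H6 := h14 (E 6)
  simp only [hin] at H6
  simp (config := { decide := true }) only [Fin.sum_univ_seven, phi, triple, E,
    EuclideanSpace.single_apply] at H6
  norm_num [hE] at H6
  intro Y Z W
  simp only [phi, triple, hY Y, hY Z, hY W]
  linear_combination (norm := ring1)
      (W 1 * Y 3 * Z 6 + (-1) * W 1 * Y 4 * Z 5 + W 1 * Y 5 * Z 4 + (-1) * W 1 * Y 6 * Z 3 + (-1) * W 2 * Y 3 * Z 5 + (-1) * W 2 * Y 4 * Z 6 + W 2 * Y 5 * Z 3 + W 2 * Y 6 * Z 4 + (-1) * W 3 * Y 1 * Z 6 + W 3 * Y 2 * Z 5 + (-1) * W 3 * Y 5 * Z 2 + W 3 * Y 6 * Z 1 + W 4 * Y 1 * Z 5 + W 4 * Y 2 * Z 6 + (-1) * W 4 * Y 5 * Z 1 + (-1) * W 4 * Y 6 * Z 2 + (-1) * W 5 * Y 1 * Z 4 + (-1) * W 5 * Y 2 * Z 3 + W 5 * Y 3 * Z 2 + W 5 * Y 4 * Z 1 + W 6 * Y 1 * Z 3 + (-1) * W 6 * Y 2 * Z 4 + (-1) * W 6 *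 Y 3 * Z 1 + W 6 * Y 4 * Z 2) * H0
      + ((-1) * W 0 * Y 3 * Z 6 + W 0 * Y 4 * Z 5 + (-1) * W 0 * Y 5 * Z 4 + W 0 * Y 6 * Z 3 + W 2 * Y 3 * Z 4 + (-1) * W 2 * Y 4 * Z 3 + (-1) * W 2 * Y 5 * Z 6 + W 2 * Y 6 * Z 5 + W 3 * Y 0 * Z 6 + (-1) * W 3 * Y 2 * Z 4 + W 3 * Y 4 * Z 2 + (-1) * W 3 * Y 6 * Z 0 + (-1) * W 4 * Y 0 * Z 5 + W 4 * Y 2 * Z 3 + (-1) * W 4 * Y 3 * Z 2 + W 4 * Y 5 * Z 0 + W 5 * Y 0 * Z 4 + W 5 * Y 2 * Z 6 + (-1) * W 5 * Y 4 * Z 0 + (-1) * W 5 * Y 6 * Z 2 + (-1) * W 6 * Y 0 * Z 3 + (-1) * W 6 * Y 2 * Z 5 + W 6 * Y 3 * Z 0 + W 6 * Y 5 * Z 2) * H1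
      + (W 0 * Y 3 * Z 5 + W 0 * Y 4 * Z 6 + (-1) * W 0 * Y 5 * Z 3 + (-1) * W 0 * Y 6 * Z 4 + (-1) * W 1 * Y 3 * Z 4 + W 1 * Y 4 * Z 3 + W 1 * Y 5 * Z 6 + (-1) * W 1 * Y 6 * Z 5 + (-1) * W 3 * Y 0 * Z 5 + W 3 * Y 1 * Z 4 + (-1) * W 3 * Y 4 * Z 1 + W 3 * Y 5 * Z 0 + (-1) * W 4 * Y 0 * Z 6 + (-1) * W 4 * Y 1 * Z 3 + W 4 * Y 3 * Z 1 + W 4 * Y 6 * Z 0 + W 5 * Y 0 * Z 3 + (-1) * W 5 * Y 1 * Z 6 + (-1) * W 5 * Y 3 * Z 0 + W 5 * Y 6 * Z 1 + W 6 * Y 0 * Z 4 + W 6 * Y 1 * Z 5 + (-1) * W 6 * Y 4 * Z 0 + (-1) * W 6 * Y 5 * Z 1) * H2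
      + (W 0 * Y 1 * Z 6 + (-1) * W 0 * Y 2 * Z 5 + W 0 * Y 5 * Z 2 + (-1) * W 0 * Y 6 * Z 1 + (-1) * W 1 * Y 0 * Z 6 + W 1 * Y 2 * Z 4 + (-1) * W 1 * Y 4 * Z 2 + W 1 * Y 6 * Z 0 + W 2 * Y 0 * Z 5 + (-1) * W 2 * Y 1 * Z 4 + W 2 * Y 4 * Z 1 + (-1) * W 2 * Y 5 * Z 0 + W 4 * Y 1 * Z 2 + (-1) * W 4 * Y 2 * Z 1 + (-1) * W 4 * Y 5 * Z 6 + W 4 * Y 6 * Z 5 + (-1) * W 5 * Y 0 * Z 2 + W 5 * Y 2 * Z 0 + W 5 * Y 4 * Z 6 + (-1) * W 5 * Y 6 * Z 4 + W 6 * Y 0 * Z 1 + (-1) * W 6 * Y 1 * Z 0 + (-1) * W 6 * Y 4 * Z 5 + W 6 * Y 5 * Z 4) * H3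
      + ((-1) * W 0 * Y 1 * Z 5 + (-1) * W 0 * Y 2 * Z 6 + W 0 * Y 5 * Z 1 + W 0 * Y 6 * Z 2 + W 1 * Y 0 * Z 5 + (-1) * W 1 * Y 2 * Z 3 + W 1 * Y 3 * Z 2 + (-1) * W 1 * Y 5 * Z 0 + W 2 * Y 0 * Z 6 + W 2 * Y 1 * Z 3 + (-1) * W 2 * Y 3 * Z 1 + (-1) * W 2 * Y 6 * Z 0 + (-1) * W 3 * Y 1 * Z 2 + W 3 * Y 2 * Z 1 + W 3 * Y 5 * Z 6 + (-1) * W 3 * Y 6 * Z 5 + (-1) * W 5 * Y 0 * Z 1 + W 5 * Y 1 * Z 0 + (-1) * W 5 * Y 3 * Z 6 + W 5 * Y 6 * Z 3 + (-1) * W 6 * Y 0 * Z 2 + W 6 * Y 2 * Z 0 + W 6 * Y 3 * Z 5 + (-1) * W 6 * Y 5 * Z 3) * H4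
      + (W 0 * Y 1 * Z 4 + W 0 * Y 2 * Z 3 + (-1) * W 0 * Y 3 * Z 2 + (-1) * W 0 * Y 4 * Z 1 + (-1) * W 1 * Y 0 * Z 4 + (-1) * W 1 * Y 2 * Z 6 + W 1 * Y 4 * Z 0 + W 1 * Y 6 * Z 2 + (-1) * W 2 * Y 0 * Z 3 + W 2 * Y 1 * Z 6 + W 2 * Y 3 * Z 0 + (-1) * W 2 * Y 6 * Z 1 + W 3 * Y 0 * Z 2 + (-1) * W 3 * Y 2 * Z 0 + (-1) * W 3 * Y 4 * Z 6 + W 3 * Y 6 * Z 4 + W 4 * Y 0 * Z 1 + (-1) * W 4 * Y 1 * Z 0 + W 4 * Y 3 * Z 6 + (-1) * W 4 * Y 6 * Z 3 + (-1) * W 6 * Y 1 * Z 2 + W 6 * Y 2 * Z 1 + (-1) * W 6 * Y 3 * Z 4 + W 6 * Y 4 * Z 3) * H5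
      + ((-1) * W 0 * Y 1 * Z 3 + W 0 * Y 2 * Z 4 + W 0 * Y 3 * Z 1 + (-1) * W 0 * Y 4 * Z 2 + W 1 * Y 0 * Z 3 + W 1 * Y 2 * Z 5 + (-1) * W 1 * Y 3 * Z 0 + (-1) * W 1 * Y 5 * Z 2 + (-1) * W 2 * Y 0 * Z 4 + (-1) * W 2 * Y 1 * Z 5 + W 2 * Y 4 * Z 0 + W 2 * Y 5 * Z 1 + (-1) * W 3 * Y 0 * Z 1 + W 3 * Y 1 * Z 0 + W 3 * Y 4 * Z 5 + (-1) * W 3 * Y 5 * Z 4 + W 4 * Y 0 * Z 2 + (-1) * W 4 * Y 2 * Z 0 + (-1) * W 4 * Y 3 * Z 5 + W 4 * Y 5 * Z 3 + W 5 * Y 1 * Z 2 + (-1) * W 5 * Y 2 * Z 1 + W 5 * Y 3 * Z 4 + (-1) * W 5 * Y 4 * Z 3) * H6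
      + (W 1 * Y 3 * Z 4 + (-1) * W 1 * Y 4 * Z 3 + (-1) * W 1 * Y 5 * Z 6 + W 1 * Y 6 * Z 5 + (-1) * W 3 * Y 1 * Z 4 + W 3 * Y 4 * Z 1 + W 4 * Y 1 * Z 3 + (-1) * W 4 * Y 3 * Z 1 + W 5 * Y 1 * Z 6 + (-1) * W 5 * Y 6 * Z 1 + (-1) * W 6 * Y 1 * Z 5 + W 6 * Y 5 * Z 1) * hb 0 1
      + (W 2 * Y 3 * Z 4 + (-1) * W 2 * Y 4 * Z 3 + (-1) * W 2 * Y 5 * Z 6 + W 2 * Y 6 * Z 5 + (-1) * W 3 * Y 2 * Z 4 + W 3 * Y 4 * Z 2 + W 4 * Y 2 * Z 3 + (-1) * W 4 * Y 3 * Z 2 + W 5 * Y 2 * Z 6 + (-1) * W 5 * Y 6 * Z 2 + (-1) * W 6 * Y 2 * Z 5 + W 6 * Y 5 * Z 2) * hb 0 2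
      + (W 1 * Y 2 * Z 3 + (-1) * W 1 * Y 3 * Z 2 + (-1) * W 2 * Y 1 * Z 3 + W 2 * Y 3 * Z 1 + W 3 * Y 1 * Z 2 + (-1) * W 3 * Y 2 * Z 1 + (-1) * W 3 * Y 5 * Z 6 + W 3 * Y 6 * Z 5 + W 5 * Y 3 * Z 6 + (-1) * W 5 * Y 6 * Z 3 + (-1) * W 6 * Y 3 * Z 5 + W 6 * Y 5 * Z 3) * hb 0 3
      + (W 1 * Y 2 * Z 4 + (-1) * W 1 * Y 4 * Z 2 + (-1) * W 2 * Y 1 * Z 4 + W 2 * Y 4 * Z 1 + W 4 * Y 1 * Z 2 + (-1) * W 4 * Y 2 * Z 1 + (-1) * W 4 * Y 5 * Z 6 + W 4 * Y 6 * Z 5 + W 5 * Y 4 * Z 6 + (-1) * W 5 * Y 6 * Z 4 + (-1) * W 6 * Y 4 * Z 5 + W 6 * Y 5 * Z 4) * hb 0 4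
      + (W 1 * Y 2 * Z 5 + (-1) * W 1 * Y 5 * Z 2 + (-1) * W 2 * Y 1 * Z 5 + W 2 * Y 5 * Z 1 + W 3 * Y 4 * Z 5 + (-1) * W 3 * Y 5 * Z 4 + (-1) * W 4 * Y 3 * Z 5 + W 4 * Y 5 * Z 3 + W 5 * Y 1 * Z 2 + (-1) * W 5 * Y 2 * Z 1 + W 5 * Y 3 * Z 4 + (-1) * W 5 * Y 4 * Z 3) * hb 0 5
      + (W 1 * Y 2 * Z 6 + (-1) * W 1 * Y 6 * Z 2 + (-1) * W 2 * Y 1 * Z 6 + W 2 * Y 6 * Z 1 + W 3 * Y 4 * Z 6 + (-1) * W 3 * Y 6 * Z 4 + (-1) * W 4 * Y 3 * Z 6 + W 4 * Y 6 * Z 3 + W 6 * Y 1 * Z 2 + (-1) * W 6 * Y 2 * Z 1 + W 6 * Y 3 * Z 4 + (-1) * W 6 * Y 4 * Z 3) * hb 0 6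
      + (W 2 * Y 3 * Z 5 + W 2 * Y 4 * Z 6 + (-1) * W 2 * Y 5 * Z 3 + (-1) * W 2 * Y 6 * Z 4 + (-1) * W 3 * Y 2 * Z 5 + W 3 * Y 5 * Z 2 + (-1) * W 4 * Y 2 * Z 6 + W 4 * Y 6 * Z 2 + W 5 * Y 2 * Z 3 + (-1) * W 5 * Y 3 * Z 2 + W 6 * Y 2 * Z 4 + (-1) * W 6 * Y 4 * Z 2) * hb 1 2
      + ((-1) * W 0 * Y 2 * Z 3 + W 0 * Y 3 * Z 2 + W 2 * Y 0 * Z 3 + (-1) * W 2 * Y 3 * Z 0 + (-1) * W 3 * Y 0 * Z 2 + W 3 * Y 2 * Z 0 + W 3 * Y 4 * Z 6 + (-1) * W 3 * Y 6 * Z 4 + (-1) * W 4 * Y 3 * Z 6 + W 4 * Y 6 * Z 3 + W 6 * Y 3 * Z 4 + (-1) * W 6 * Y 4 * Z 3) * hb 1 3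
      + ((-1) * W 0 * Y 2 * Z 4 + W 0 * Y 4 * Z 2 + W 2 * Y 0 * Z 4 + (-1) * W 2 * Y 4 * Z 0 + (-1) * W 3 * Y 4 * Z 5 + W 3 * Y 5 * Z 4 + (-1) * W 4 * Y 0 * Z 2 + W 4 * Y 2 * Z 0 + W 4 * Y 3 * Z 5 + (-1) * W 4 * Y 5 * Z 3 + (-1) * W 5 * Y 3 * Z 4 + W 5 * Y 4 * Z 3) * hb 1 4
      + ((-1) * W 0 * Y 2 * Z 5 + W 0 * Y 5 * Z 2 + W 2 * Y 0 * Z 5 + (-1) * W 2 * Y 5 * Z 0 + (-1) * W 4 * Y 5 * Z 6 + W 4 * Y 6 * Z 5 + (-1) * W 5 * Y 0 * Z 2 + W 5 * Y 2 * Z 0 + W 5 * Y 4 * Z 6 + (-1) * W 5 * Y 6 * Z 4 + (-1) * W 6 * Y 4 * Z 5 + W 6 * Y 5 * Z 4) * hb 1 5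
      + ((-1) * W 0 * Y 2 * Z 6 + W 0 * Y 6 * Z 2 + W 2 * Y 0 * Z 6 + (-1) * W 2 * Y 6 * Z 0 + W 3 * Y 5 * Z 6 + (-1) * W 3 * Y 6 * Z 5 + (-1) * W 5 * Y 3 * Z 6 + W 5 * Y 6 * Z 3 + (-1) * W 6 * Y 0 * Z 2 + W 6 * Y 2 * Z 0 + W 6 * Y 3 * Z 5 + (-1) * W 6 * Y 5 * Z 3) * hb 1 6
      + (W 0 * Y 1 * Z 3 + (-1) * W 0 * Y 3 * Z 1 + (-1) * W 1 * Y 0 * Z 3 + W 1 * Y 3 * Z 0 + W 3 * Y 0 * Z 1 + (-1) * W 3 * Y 1 * Z 0 + (-1) * W 3 * Y 4 * Z 5 + W 3 * Y 5 * Z 4 + W 4 * Y 3 * Z 5 + (-1) * W 4 * Y 5 * Z 3 + (-1) * W 5 * Y 3 * Z 4 + W 5 * Y 4 * Z 3) * hb 2 3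
      + (W 0 * Y 1 * Z 4 + (-1) * W 0 * Y 4 * Z 1 + (-1) * W 1 * Y 0 * Z 4 + W 1 * Y 4 * Z 0 + (-1) * W 3 * Y 4 * Z 6 + W 3 * Y 6 * Z 4 + W 4 * Y 0 * Z 1 + (-1) * W 4 * Y 1 * Z 0 + W 4 * Y 3 * Z 6 + (-1) * W 4 * Y 6 * Z 3 + (-1) * W 6 * Y 3 * Z 4 + W 6 * Y 4 * Z 3) * hb 2 4
      + (W 0 * Y 1 * Z 5 + (-1) * W 0 * Y 5 * Z 1 + (-1) * W 1 * Y 0 * Z 5 + W 1 * Y 5 * Z 0 + (-1) * W 3 * Y 5 * Z 6 + W 3 * Y 6 * Z 5 + W 5 * Y 0 * Z 1 + (-1) * W 5 * Y 1 * Z 0 + W 5 * Y 3 * Z 6 + (-1) * W 5 * Y 6 * Z 3 + (-1) * W 6 * Y 3 * Z 5 + W 6 * Y 5 * Z 3) * hb 2 5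
      + (W 0 * Y 1 * Z 6 + (-1) * W 0 * Y 6 * Z 1 + (-1) * W 1 * Y 0 * Z 6 + W 1 * Y 6 * Z 0 + (-1) * W 4 * Y 5 * Z 6 + W 4 * Y 6 * Z 5 + W 5 * Y 4 * Z 6 + (-1) * W 5 * Y 6 * Z 4 + W 6 * Y 0 * Z 1 + (-1) * W 6 * Y 1 * Z 0 + (-1) * W 6 * Y 4 * Z 5 + W 6 * Y 5 * Z 4) * hb 2 6
      + (W 1 * Y 4 * Z 5 + (-1) * W 1 * Y 5 * Z 4 + W 2 * Y 4 * Z 6 + (-1) * W 2 * Y 6 * Z 4 + (-1) * W 4 * Y 1 * Z 5 + (-1) * W 4 * Y 2 * Z 6 + W 4 * Y 5 * Z 1 + W 4 * Y 6 * Z 2 + W 5 * Y 1 * Z 4 + (-1) * W 5 * Y 4 * Z 1 + W 6 * Y 2 * Z 4 + (-1) * W 6 * Y 4 * Z 2) * hb 3 4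
      + ((-1) * W 0 * Y 4 * Z 5 + W 0 * Y 5 * Z 4 + W 2 * Y 5 * Z 6 + (-1) * W 2 * Y 6 * Z 5 + W 4 * Y 0 * Z 5 + (-1) * W 4 * Y 5 * Z 0 + (-1) * W 5 * Y 0 * Z 4 + (-1) * W 5 * Y 2 * Z 6 + W 5 * Y 4 * Z 0 + W 5 * Y 6 * Z 2 + W 6 * Y 2 * Z 5 + (-1) * W 6 * Y 5 * Z 2) * hb 3 5
      + ((-1) * W 0 * Y 4 * Z 6 + W 0 * Y 6 * Z 4 + (-1) * W 1 * Y 5 * Z 6 + W 1 * Y 6 * Z 5 + W 4 * Y 0 * Z 6 + (-1) * W 4 * Y 6 * Z 0 + W 5 * Y 1 * Z 6 + (-1) * W 5 * Y 6 * Z 1 + (-1) * W 6 * Y 0 * Z 4 + (-1) * W 6 * Y 1 * Z 5 + W 6 * Y 4 * Z 0 + W 6 * Y 5 * Z 1) * hb 3 6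
      + (W 0 * Y 3 * Z 5 + (-1) * W 0 * Y 5 * Z 3 + W 1 * Y 5 * Z 6 + (-1) * W 1 * Y 6 * Z 5 + (-1) * W 3 * Y 0 * Z 5 + W 3 * Y 5 * Z 0 + W 5 * Y 0 * Z 3 + (-1) * W 5 * Y 1 * Z 6 + (-1) * W 5 * Y 3 * Z 0 + W 5 * Y 6 * Z 1 + W 6 * Y 1 * Z 5 + (-1) * W 6 * Y 5 * Z 1) * hb 4 5
      + (W 0 * Y 3 * Z 6 + (-1) * W 0 * Y 6 * Z 3 + W 2 * Y 5 * Z 6 + (-1) * W 2 * Y 6 * Z 5 + (-1) * W 3 * Y 0 * Z 6 + W 3 * Y 6 * Z 0 + (-1) * W 5 * Y 2 * Z 6 + W 5 * Y 6 * Z 2 + W 6 * Y 0 * Z 3 + W 6 * Y 2 * Z 5 + (-1) * W 6 * Y 3 * Z 0 + (-1) * W 6 * Y 5 * Z 2) * hb 4 6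
      + (W 1 * Y 3 * Z 6 + (-1) * W 1 * Y 6 * Z 3 + (-1) * W 2 * Y 4 * Z 6 + W 2 * Y 6 * Z 4 + (-1) * W 3 * Y 1 * Z 6 + W 3 * Y 6 * Z 1 + W 4 * Y 2 * Z 6 + (-1) * W 4 * Y 6 * Z 2 + W 6 * Y 1 * Z 3 + (-1) * W 6 * Y 2 * Z 4 + (-1) * W 6 * Y 3 * Z 1 + W 6 * Y 4 * Z 2) * hb 5 6
      + ((1/2) * W 0 * Y 1 * Z 2 + (-1/2) * W 0 * Y 2 * Z 1 + (1/2) * W 0 * Y 3 * Z 4 + (-1/2) * W 0 * Y 4 * Z 3 + (-1/2) * W 0 * Y 5 * Z 6 + (1/2) * W 0 * Y 6 * Z 5 + (-1/2) * W 1 * Y 0 * Z 2 + (1/2) * W 1 * Y 2 * Z 0 + (1/2) * W 2 * Y 0 * Z 1 + (-1/2) * W 2 * Y 1 * Z 0 + (-1/2) * W 3 * Y 0 * Z 4 + (1/2) * W 3 * Y 4 * Z 0 + (1/2) * W 4 * Y 0 * Z 3 + (-1/2) * W 4 * Y 3 * Z 0 + (1/2) * W 5 * Y 0 * Z 6 +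 (-1/2) * W 5 * Y 6 * Z 0 + (-1/2) * W 6 * Y 0 * Z 5 + (1/2) * W 6 * Y 5 * Z 0) * hb 0 0
      + ((1/2) * W 0 * Y 1 * Z 2 + (-1/2) * W 0 * Y 2 * Z 1 + (-1/2) * W 1 * Y 0 * Z 2 + (1/2) * W 1 * Y 2 * Z 0 + (1/2) * W 1 * Y 3 * Z 5 + (1/2) * W 1 * Y 4 * Z 6 + (-1/2) * W 1 * Y 5 * Z 3 + (-1/2) * W 1 * Y 6 * Z 4 + (1/2) * W 2 * Y 0 * Z 1 + (-1/2) * W 2 * Y 1 * Z 0 + (-1/2) * W 3 * Y 1 * Z 5 + (1/2) * W 3 * Y 5 * Z 1 + (-1/2) * W 4 * Y 1 * Z 6 + (1/2) * W 4 * Y 6 * Z 1 + (1/2) * W 5 * Y 1 * Z 3 + (-1/2) * W 5 * Y 3 * Z 1 + (1/2) * W 6 * Y 1 * Z 4 + (-1/2) * W 6 * Y 4 * Z 1) * hb 1 1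
      + ((1/2) * W 0 * Y 1 * Z 2 + (-1/2) * W 0 * Y 2 * Z 1 + (-1/2) * W 1 * Y 0 * Z 2 + (1/2) * W 1 * Y 2 * Z 0 + (1/2) * W 2 * Y 0 * Z 1 + (-1/2) * W 2 * Y 1 * Z 0 + (1/2) * W 2 * Y 3 * Z 6 + (-1/2) * W 2 * Y 4 * Z 5 + (1/2) * W 2 * Y 5 * Z 4 + (-1/2) * W 2 * Y 6 * Z 3 + (-1/2) * W 3 * Y 2 * Z 6 + (1/2) * W 3 * Y 6 * Z 2 + (1/2) * W 4 * Y 2 * Z 5 + (-1/2) * W 4 * Y 5 * Z 2 + (-1/2) * W 5 * Y 2 * Z 4 + (1/2) * W 5 * Y 4 * Z 2 + (1/2) * W 6 * Y 2 * Z 3 + (-1/2) * W 6 * Y 3 * Z 2) * hb 2 2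
      + ((1/2) * W 0 * Y 3 * Z 4 + (-1/2) * W 0 * Y 4 * Z 3 + (1/2) * W 1 * Y 3 * Z 5 + (-1/2) * W 1 * Y 5 * Z 3 + (1/2) * W 2 * Y 3 * Z 6 + (-1/2) * W 2 * Y 6 * Z 3 + (-1/2) * W 3 * Y 0 * Z 4 + (-1/2) * W 3 * Y 1 * Z 5 + (-1/2) * W 3 * Y 2 * Z 6 + (1/2) * W 3 * Y 4 * Z 0 + (1/2) * W 3 * Y 5 * Z 1 + (1/2) * W 3 * Y 6 * Z 2 + (1/2) * W 4 * Y 0 * Z 3 + (-1/2) * W 4 * Y 3 * Z 0 + (1/2) * W 5 * Y 1 * Z 3 + (-1/2) * W 5 * Y 3 * Z 1 + (1/2) * W 6 * Y 2 * Z 3 + (-1/2) * W 6 * Y 3 * Z 2) * hb 3 3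
      + ((1/2) * W 0 * Y 3 * Z 4 + (-1/2) * W 0 * Y 4 * Z 3 + (1/2) * W 1 * Y 4 * Z 6 + (-1/2) * W 1 * Y 6 * Z 4 + (-1/2) * W 2 * Y 4 * Z 5 + (1/2) * W 2 * Y 5 * Z 4 + (-1/2) * W 3 * Y 0 * Z 4 + (1/2) * W 3 * Y 4 * Z 0 + (1/2) * W 4 * Y 0 * Z 3 + (-1/2) * W 4 * Y 1 * Z 6 + (1/2) * W 4 * Y 2 * Z 5 + (-1/2) * W 4 * Y 3 * Z 0 + (-1/2) * W 4 * Y 5 * Z 2 + (1/2) * W 4 * Y 6 * Z 1 + (-1/2) * W 5 * Y 2 * Z 4 + (1/2) * W 5 * Y 4 * Z 2 + (1/2) * W 6 * Y 1 * Z 4 + (-1/2) * W 6 * Y 4 * Z 1) * hb 4 4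
      + ((-1/2) * W 0 * Y 5 * Z 6 + (1/2) * W 0 * Y 6 * Z 5 + (1/2) * W 1 * Y 3 * Z 5 + (-1/2) * W 1 * Y 5 * Z 3 + (-1/2) * W 2 * Y 4 * Z 5 + (1/2) * W 2 * Y 5 * Z 4 + (-1/2) * W 3 * Y 1 * Z 5 + (1/2) * W 3 * Y 5 * Z 1 + (1/2) * W 4 * Y 2 * Z 5 + (-1/2) * W 4 * Y 5 * Z 2 + (1/2) * W 5 * Y 0 * Z 6 + (1/2) * W 5 * Y 1 * Z 3 + (-1/2) * W 5 * Y 2 * Z 4 + (-1/2) * W 5 * Y 3 * Z 1 + (1/2) * W 5 * Y 4 * Z 2 + (-1/2) * W 5 * Y 6 * Z 0 + (-1/2) * W 6 * Y 0 * Z 5 + (1/2) * W 6 * Y 5 * Z 0) * hb 5 5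
      + ((-1/2) * W 0 * Y 5 * Z 6 + (1/2) * W 0 * Y 6 * Z 5 + (1/2) * W 1 * Y 4 * Z 6 + (-1/2) * W 1 * Y 6 * Z 4 + (1/2) * W 2 * Y 3 * Z 6 + (-1/2) * W 2 * Y 6 * Z 3 + (-1/2) * W 3 * Y 2 * Z 6 + (1/2) * W 3 * Y 6 * Z 2 + (-1/2) * W 4 * Y 1 * Z 6 + (1/2) * W 4 * Y 6 * Z 1 + (1/2) * W 5 * Y 0 * Z 6 + (-1/2) * W 5 * Y 6 * Z 0 + (-1/2) * W 6 * Y 0 * Z 5 + (1/2) * W 6 * Y 1 * Z 4 + (1/2) * W 6 * Y 2 * Z 3 + (-1/2) * W 6 * Y 3 * Z 2 + (-1/2) * W 6 * Y 4 * Z 1 + (1/2) * W 6 * Y 5 * Z 0) * hb 6 6
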